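/- Let W : x ↦ W_x be a map from a finite set X to density matrices, p a probability distribution on X, and t ≥ 0. Then min over density matrices ρ of ∑_x p(x) Tr[W_x^{1+t} ρ^{-t}] equals (Tr[(∑_x p(x) W_x^{1+t})^{1/(1+t)}])^{1+t}, and the minimum is attained at ρ = (∑_x p(x)W_x^{1+t})^{1/(1+t)} / Tr[(∑_x p(x)W_x^{1+t})^{1/(1+t)}]. -/

import Mathlib

open Matrix
open scoped ComplexOrder Kronecker

noncomputable def mpow {n : Type*} [Fintype n] [DecidableEq n]
    (A : Matrix n n ℂ) (s : ℝ) : Matrix n n ℂ :=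
  cfc (fun x : ℝ => x ^ s) A

noncomputable def mlog {n : Type*} [Fintype n] [DecidableEq n]
    (A : Matrix n n ℂ) : Matrix n n ℂ :=
  cfc Real.log A

/-- `∑ x, p x • W x ^{1+t}`. -/
noncomputable def Smat {X : Type*} [Fintype X] {d : ℕ}
    (W : X → Matrix (Fin d) (Fin d) ℂ) (p : X → ℝ) (t : ℝ) : Matrix (Fin d) (Fin d) ℂ :=
  ∑ x, (p x : ℂ) • mpow (W x) (1+t)

/-- `(Tr[(∑_x p(x) W_x^{1+t})^{1/(1+t)}])^{1+t}`. -/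
noncomputable def targetVal {X : Type*} [Fintype X] {d : ℕ}
    (W : X → Matrix (Fin d) (Fin d) ℂ) (p : X → ℝ) (t : ℝ) : ℝ :=
  ((Matrix.trace (mpow (Smat W p t) (1/(1+t)))).re) ^ (1+t)

section Aux

variable {n : Type*} [Fintype n] [DecidableEq n]

lemma finCtsOn (f : ℝ → ℝ) (s : Set ℝ) (hs : s.Finite) : ContinuousOn f s := by
  rw [continuousOn_iff_continuous_restrict]
  have : Finite s := hs
  exact continuous_of_discreteTopology

lemma trace_cfc' {A : Matrix n n ℂ} (hA : A.IsHermitian) (f : ℝ → ℝ) :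
    Matrix.trace (cfc f A) = ((∑ i, f (hA.eigenvalues i) : ℝ) : ℂ) := by
  rw [hA.cfc_eq, Matrix.IsHermitian.cfc, Unitary.conjStarAlgAut_apply, Matrix.trace_mul_cycle,
    Unitary.star_mul_self_of_mem (SetLike.coe_mem _), Matrix.one_mul,
    Matrix.trace_diagonal]
  push_cast
  rfl

lemma trace_cfc_mul' {A B : Matrix n n ℂ} (hA : A.IsHermitian) (hB : B.IsHermitian)
    (f g : ℝ → ℝ) :
    Matrix.trace (cfc f A * cfc g B) =
      ((∑ i, ∑ j, f (hA.eigenvalues i) * g (hB.eigenvalues j) *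
        Complex.normSq ((star (hA.eigenvectorUnitary : Matrix n n ℂ) *
          (hB.eigenvectorUnitary : Matrix n n ℂ)) i j) : ℝ) : ℂ) := by
  set U := (hA.eigenvectorUnitary : Matrix n n ℂ)
  set V := (hB.eigenvectorUnitary : Matrix n n ℂ)
  set M := star U * V with hM
  set dv : n → ℂ := (RCLike.ofReal : ℝ → ℂ) ∘ f ∘ hA.eigenvalues with hdv
  set ev : n → ℂ := (RCLike.ofReal : ℝ → ℂ) ∘ g ∘ hB.eigenvalues with hev
  have h1 : cfc f A * cfc g B = U * (diagonal dv * M * diagonal ev * star M) * star U := by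
    rw [hA.cfc_eq, hB.cfc_eq, Matrix.IsHermitian.cfc, Matrix.IsHermitian.cfc,
      Unitary.conjStarAlgAut_apply, Unitary.conjStarAlgAut_apply]
    rw [hM, StarMul.star_mul, star_star]
    simp only [Matrix.mul_assoc, ← hdv, ← hev,
      show U * star U = 1 from Unitary.mul_star_self_of_mem (SetLike.coe_mem hA.eigenvectorUnitary),
      Matrix.mul_one]
    rfl
  rw [h1, Matrix.trace_mul_cycle, ← Matrix.mul_assoc,
    Unitary.star_mul_self_of_mem (SetLike.coe_mem _), Matrix.one_mul]
  have e1 : diagonal dv * M * diagonal ev = Matrix.of (fun i j => dv i * M i j * ev j) := by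
    ext i j
    simp [Matrix.diagonal_mul, Matrix.mul_diagonal]
  rw [e1]
  have e2 : Matrix.trace (Matrix.of (fun i j => dv i * M i j * ev j) * star M)
      = ∑ i, ∑ j, dv i * M i j * ev j * star (M i j) := by
    simp [Matrix.trace, Matrix.mul_apply, Matrix.star_apply]
  rw [e2]
  push_cast
  refine Finset.sum_congr rfl fun i _ => Finset.sum_congr rfl fun j _ => ?_
  have hst : star (M i j) = (starRingEnd ℂ) (M i j) := rfl
  rw [hst]
  have hterm : dv i * M i j * ev j * (starRingEnd ℂ) (M i j)
      = dv i * ev j * ((M i j) * (starRingEnd ℂ) (M i j)) := by ring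
  rw [hterm, Complex.mul_conj]
  rfl

lemma row_sums {A B : Matrix n n ℂ} (hA : A.IsHermitian) (hB : B.IsHermitian) :
    (∀ i, ∑ j, Complex.normSq ((star (hA.eigenvectorUnitary : Matrix n n ℂ) *
          (hB.eigenvectorUnitary : Matrix n n ℂ)) i j) = 1) ∧
    (∀ j, ∑ i, Complex.normSq ((star (hA.eigenvectorUnitary : Matrix n n ℂ) *
          (hB.eigenvectorUnitary : Matrix n n ℂ)) i j) = 1) := by
  set U := (hA.eigenvectorUnitary : Matrix n n ℂ)
  set V := (hB.eigenvectorUnitary : Matrix n n ℂ)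
  set M := star U * V with hM
  have hMs : M * star M = 1 := by
    rw [hM, StarMul.star_mul, star_star]
    calc star U * V * (star V * U) = star U * (V * star V) * U := by
          simp only [Matrix.mul_assoc]
      _ = 1 := by
          rw [Unitary.mul_star_self_of_mem (SetLike.coe_mem _), Matrix.mul_one,
            Unitary.star_mul_self_of_mem (SetLike.coe_mem _)]
  have hsM : star M * M = 1 := by
    rw [hM, StarMul.star_mul, star_star]
    calc star V * U * (star U * V) = star V * (U * star U) * V := by
          simp only [Matrix.mul_assoc]
      _ = 1 := by
          rw [Unitary.mul_star_self_of_mem (SetLike.coe_mem _), Matrix.mul_one,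
            Unitary.star_mul_self_of_mem (SetLike.coe_mem _)]
  constructor
  · intro i
    have := congrFun (congrFun hMs i) i
    simp only [Matrix.mul_apply, Matrix.star_apply, Matrix.one_apply_eq] at this
    have h2 : ((∑ j, Complex.normSq (M i j) : ℝ) : ℂ) = 1 := by
      rw [← this]
      push_cast
      refine Finset.sum_congr rfl fun j _ => ?_
      have hst : star (M i j) = (starRingEnd ℂ) (M i j) := rfl
      rw [hst, Complex.mul_conj]
    exact_mod_cast h2
  · intro j
    have := congrFun (congrFun hsM j) j
    simp only [Matrix.mul_apply, Matrix.star_apply, Matrix.one_apply_eq] at this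
    have h2 : ((∑ i, Complex.normSq (M i j) : ℝ) : ℂ) = 1 := by
      rw [← this]
      push_cast
      refine Finset.sum_congr rfl fun i _ => ?_
      have hst : star (M i j) = (starRingEnd ℂ) (M i j) := rfl
      rw [hst, mul_comm, Complex.mul_conj]
    exact_mod_cast h2

lemma scalar_ineq {d : ℕ} (t : ℝ) (ht : 0 ≤ t) (e r : Fin d → ℝ)
    (he : ∀ i, 0 < e i) (hr : ∀ j, 0 < r j) (hr1 : ∑ j, r j = 1)
    (m : Fin d → Fin d → ℝ) (hm : ∀ i j, 0 ≤ m i j)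
    (hrow : ∀ i, ∑ j, m i j = 1) (hcol : ∀ j, ∑ i, m i j = 1) :
    (∑ i, e i ^ (1/(1+t))) ^ (1+t) ≤ ∑ i, ∑ j, e i * (r j ^ (-t)) * m i j := by
  have h1t : (0:ℝ) < 1 + t := by linarith
  set α : ℝ := 1/(1+t) with hα
  have hα0 : 0 < α := by positivity
  have hα1 : α ≤ 1 := by
    rw [hα, div_le_one h1t]; linarith
  set a : Fin d → ℝ := fun j => ∑ i, m i j * e i with ha
  have haj : ∀ j, 0 ≤ a j := fun j =>
    Finset.sum_nonneg fun i _ => mul_nonneg (hm i j) (he i).le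
  have hRHS : ∑ i, ∑ j, e i * (r j ^ (-t)) * m i j = ∑ j, a j * r j ^ (-t) := by
    rw [Finset.sum_comm]
    refine Finset.sum_congr rfl fun j _ => ?_
    rw [ha, Finset.sum_mul]
    exact Finset.sum_congr rfl fun i _ => by ring
  rw [hRHS]
  have stepA : ∑ i, e i ^ α ≤ ∑ j, (a j) ^ α := by
    have h1 : ∑ i, e i ^ α = ∑ j, ∑ i, m i j * e i ^ α := by
      rw [Finset.sum_comm]
      refine Finset.sum_congr rfl fun i _ => ?_
      rw [← Finset.sum_mul, hrow i, one_mul]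
    rw [h1]
    refine Finset.sum_le_sum fun j _ => ?_
    have := (Real.concaveOn_rpow hα0.le hα1).le_map_sum
      (t := Finset.univ) (w := fun i => m i j) (p := e)
      (fun i _ => hm i j) (hcol j) (fun i _ => (he i).le)
    simpa [smul_eq_mul] using this
  have hsa : 0 ≤ ∑ j, (a j) ^ α := Finset.sum_nonneg fun j _ =>
    Real.rpow_nonneg (haj j) _
  have hse : 0 ≤ ∑ i, e i ^ α := Finset.sum_nonneg fun i _ =>
    Real.rpow_nonneg (he i).le _
  have stepB : (∑ j, (a j) ^ α) ^ (1+t) ≤ ∑ j, a j * r j ^ (-t) := by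
    rcases eq_or_lt_of_le ht with h0 | h0
    · subst h0
      simp only [hα]
      norm_num
    · -- t > 0
      have hconj : Real.HolderConjugate (1+t) ((1+t)/t) := by
        rw [Real.holderConjugate_iff]
        constructor
        · linarith
        · field_simp
      have hH := Real.inner_le_Lp_mul_Lq (s := Finset.univ)
        (fun j => (a j * r j ^ (-t)) ^ α) (fun j => r j ^ (t * α)) hconj
      have hfg : ∀ j : Fin d, (a j * r j ^ (-t)) ^ α * r j ^ (t * α) = a j ^ α := by
        intro j
        rw [Real.mul_rpow (haj j) (Real.rpow_nonneg (hr j).le _), mul_assoc,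
          ← Real.rpow_mul (hr j).le, ← Real.rpow_add (hr j)]
        have h2 : -t * α + t * α = 0 := by ring
        rw [h2, Real.rpow_zero, mul_one]
      have hone : α * (1 + t) = 1 := by
        rw [hα]; field_simp
      have habs1 : ∀ j : Fin d, |(a j * r j ^ (-t)) ^ α| ^ (1+t) = a j * r j ^ (-t) := by
        intro j
        have hnn : 0 ≤ a j * r j ^ (-t) := mul_nonneg (haj j) (Real.rpow_nonneg (hr j).le _)
        rw [abs_of_nonneg (Real.rpow_nonneg hnn _), ← Real.rpow_mul hnn, hone, Real.rpow_one]
      have habs2 : ∀ j : Fin d, |r j ^ (t * α)| ^ ((1+t)/t) = r j := by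
        intro j
        rw [abs_of_nonneg (Real.rpow_nonneg (hr j).le _), ← Real.rpow_mul (hr j).le]
        have h3 : t * α * ((1+t)/t) = 1 := by
          rw [hα]; field_simp
        rw [h3, Real.rpow_one]
      simp only [hfg, habs1, habs2, hr1, Real.one_rpow, mul_one] at hH
      have hnnsum : 0 ≤ ∑ j, a j * r j ^ (-t) :=
        Finset.sum_nonneg fun j _ => mul_nonneg (haj j) (Real.rpow_nonneg (hr j).le _)
      calc (∑ j, (a j) ^ α) ^ (1+t)
          ≤ ((∑ j, a j * r j ^ (-t)) ^ α) ^ (1+t) := by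
            apply Real.rpow_le_rpow hsa _ h1t.le
            simpa [hα] using hH
        _ = ∑ j, a j * r j ^ (-t) := by
            rw [← Real.rpow_mul hnnsum, hone, Real.rpow_one]
  calc (∑ i, e i ^ α) ^ (1+t) ≤ (∑ j, (a j) ^ α) ^ (1+t) :=
        Real.rpow_le_rpow hse stepA h1t.le
    _ ≤ ∑ j, a j * r j ^ (-t) := stepB

end Aux

/-- The minimum over density matrices ρ of `∑_x p(x) Tr[W_x^{1+t} ρ^{-t}]` equals
`(Tr[(∑_x p(x) W_x^{1+t})^{1/(1+t)}])^{1+t}`, attained at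
`ρ = (∑_x p(x)W_x^{1+t})^{1/(1+t)} / Tr[(∑_x p(x)W_x^{1+t})^{1/(1+t)}]`. -/
theorem min_trace_power {X : Type*} [Fintype X] {d : ℕ}
    (W : X → Matrix (Fin d) (Fin d) ℂ) (p : X → ℝ) (t : ℝ) (ht : 0 ≤ t)
    (hW : ∀ x, (W x).PosSemidef) (hWtr : ∀ x, Matrix.trace (W x) = 1)
    (hp : ∀ x, 0 ≤ p x) (hp1 : ∑ x, p x = 1)
    (hS : (Smat W p t).PosDef) :
    (∀ ρ : Matrix (Fin d) (Fin d) ℂ, ρ.PosDef → Matrix.trace ρ = 1 →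
        targetVal W p t ≤ ∑ x, p x * (Matrix.trace (mpow (W x) (1+t) * mpow ρ (-t))).re) ∧
    (∑ x, p x * (Matrix.trace (mpow (W x) (1+t) * mpow
        (((((Matrix.trace (mpow (Smat W p t) (1/(1+t)))).re)⁻¹ : ℝ) : ℂ) •
          mpow (Smat W p t) (1/(1+t))) (-t))).re
      = targetVal W p t) := by
  have h1t : (0:ℝ) < 1 + t := by linarith
  have hSH : (Smat W p t).IsHermitian := hS.1
  have hSA : IsSelfAdjoint (Smat W p t) := hSH
  set e := hSH.eigenvalues with he'
  have he : ∀ i, 0 < e i := hS.eigenvalues_pos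
  set c : ℝ := ∑ i, e i ^ (1/(1+t)) with hc'
  have hceq : (Matrix.trace (mpow (Smat W p t) (1/(1+t)))).re = c := by
    rw [mpow, trace_cfc' hSH]
    exact Complex.ofReal_re _
  have htarget : targetVal W p t = c ^ (1+t) := by rw [targetVal, hceq]
  have hred : ∀ B : Matrix (Fin d) (Fin d) ℂ,
      ∑ x, p x * (Matrix.trace (mpow (W x) (1+t) * B)).re
        = (Matrix.trace (Smat W p t * B)).re := by
    intro B
    have h1 : Smat W p t * B = ∑ x, (p x : ℂ) • (mpow (W x) (1+t) * B) := by
      rw [Smat, Finset.sum_mul]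
      exact Finset.sum_congr rfl fun x _ => smul_mul_assoc _ _ _
    rw [h1, Matrix.trace_sum, Complex.re_sum]
    refine (Finset.sum_congr rfl fun x _ => ?_).symm
    rw [Matrix.trace_smul, smul_eq_mul, Complex.mul_re]
    simp
  constructor
  · -- the inequality
    intro ρ hρ hρtr
    have hρH : ρ.IsHermitian := hρ.1
    have hρA : IsSelfAdjoint ρ := hρH
    set r := hρH.eigenvalues with hr'
    have hr : ∀ j, 0 < r j := hρ.eigenvalues_pos
    have hrsum : ∑ j, r j = 1 := by
      have h2 : Matrix.trace (cfc (fun x : ℝ => x) ρ) = ((∑ j, r j : ℝ) : ℂ) :=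
        trace_cfc' hρH _
      rw [cfc_id' ℝ ρ, hρtr] at h2
      exact_mod_cast h2.symm
    rw [hred]
    have hprod : Smat W p t * mpow ρ (-t)
        = cfc (fun x : ℝ => x) (Smat W p t) * cfc (fun x : ℝ => x ^ (-t)) ρ := by
      rw [cfc_id' ℝ (Smat W p t), mpow]
    rw [hprod, trace_cfc_mul' hSH hρH, Complex.ofReal_re, htarget]
    obtain ⟨hrowm, hcolm⟩ := row_sums hSH hρH
    exact scalar_ineq t ht e r he hr hrsum _ (fun i j => Complex.normSq_nonneg _) hrowm hcolm
  · -- the equality at the minimizer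
    rw [hceq]
    by_cases hd : Nonempty (Fin d)
    · haveI := hd
      have hcpos : 0 < c := by
        rw [hc']
        exact Finset.sum_pos (fun i _ => Real.rpow_pos_of_pos (he i) _) Finset.univ_nonempty
      have hfinS : (spectrum ℝ (Smat W p t)).Finite := Matrix.finite_real_spectrum
      have hsmul : (((c⁻¹ : ℝ) : ℂ)) • mpow (Smat W p t) (1/(1+t))
          = cfc (fun x : ℝ => c⁻¹ * x ^ (1/(1+t))) (Smat W p t) := by
        rw [Complex.coe_smul, mpow,
          ← cfc_smul c⁻¹ (fun x : ℝ => x ^ (1/(1+t))) (Smat W p t) (finCtsOn _ _ hfinS)]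
        simp only [smul_eq_mul]
      have hcomp : mpow ((((c⁻¹ : ℝ) : ℂ)) • mpow (Smat W p t) (1/(1+t))) (-t)
          = cfc (fun x : ℝ => (c⁻¹ * x ^ (1/(1+t))) ^ (-t)) (Smat W p t) := by
        rw [mpow, hsmul,
          ← cfc_comp (fun x : ℝ => x ^ (-t)) (fun x : ℝ => c⁻¹ * x ^ (1/(1+t)))
            (Smat W p t) hSA (finCtsOn _ _ (hfinS.image _)) (finCtsOn _ _ hfinS)]
        rfl
      rw [hred, hcomp]
      have hmul : Smat W p t * cfc (fun x : ℝ => (c⁻¹ * x ^ (1/(1+t))) ^ (-t)) (Smat W p t)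
          = cfc (fun x : ℝ => x * (c⁻¹ * x ^ (1/(1+t))) ^ (-t)) (Smat W p t) := by
        nth_rewrite 1 [← cfc_id' ℝ (Smat W p t)]
        rw [← cfc_mul _ _ _ (finCtsOn _ _ hfinS) (finCtsOn _ _ hfinS)]
      rw [hmul, trace_cfc' hSH, Complex.ofReal_re, htarget]
      have hterm : ∀ i, e i * (c⁻¹ * e i ^ (1/(1+t))) ^ (-t)
          = c ^ t * e i ^ (1/(1+t)) := by
        intro i
        have h5 : (c⁻¹) ^ (-t) = c ^ t := by
          rw [Real.inv_rpow hcpos.le, ← Real.rpow_neg hcpos.le, neg_neg]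
        have h6 : (1:ℝ) + (1/(1+t)) * (-t) = 1/(1+t) := by
          field_simp
          ring
        calc e i * (c⁻¹ * e i ^ (1/(1+t))) ^ (-t)
            = c ^ t * (e i ^ (1:ℝ) * e i ^ ((1/(1+t)) * (-t))) := by
              rw [Real.mul_rpow (inv_nonneg.mpr hcpos.le)
                (Real.rpow_nonneg (he i).le _), h5,
                ← Real.rpow_mul (he i).le, Real.rpow_one]
              ring
          _ = c ^ t * e i ^ (1/(1+t)) := by
              rw [← Real.rpow_add (he i), h6]
      rw [Finset.sum_congr rfl (fun i _ => hterm i), ← Finset.mul_sum, ← hc',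
        add_comm (1:ℝ) t, Real.rpow_add hcpos, Real.rpow_one]
    · -- d = 0 : everything is trivially zero
      have hempty : IsEmpty (Fin d) := not_nonempty_iff.mp hd
      have htr0 : ∀ (A : Matrix (Fin d) (Fin d) ℂ), Matrix.trace A = 0 := fun A => by
        simp [Matrix.trace]
      have hc0 : c = 0 := by rw [hc']; simp
      rw [htarget, hc0, Real.zero_rpow h1t.ne']
      simp [htr0]
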